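/- Let S be a Hausdorff topological space which is a k-space (compactly generated) and which admits a family (K_i)_{i∈I} of compact subsets covering S such that each K_i is locally connected in its subspace topology and such that every compact subset of S is contained in a finite union ⋃_{i∈Φ} K_i for some finite Φ ⊆ I. Let X, Y, and Z be Hausdorff topological spaces with X regular, let α : X → Y be a local homeomorphism, and let β : X → Z be a continuous map such that (α,β) : X → Y × Z is a proper map. Then the map g : C(S,X) → C(S,Y) × C(S,Z), γ ↦ (α ∘ γ, β ∘ γ), between spaces of continuous maps with the compact-open topology, is proper: the preimage under g of every compact subset of C(S,Y) × C(S,Z) is compact. -/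

import Mathlib

open Set Filter Topology

lemma trap_lemma {K X Y : Type*} [TopologicalSpace K] [TopologicalSpace X] [TopologicalSpace Y]
    {γ : K → X} (hγ : Continuous γ) (e : OpenPartialHomeomorph X Y)
    {W : Set X} (hWo : IsOpen W) (hWU : closure W ⊆ e.source)
    {N : Set K} (hN : IsPreconnected N) {s₀ : K} (hs₀ : s₀ ∈ N) (hγs₀ : γ s₀ ∈ W)
    (hmaps : ∀ s ∈ N, e (γ s) ∈ e '' W) : ∀ s ∈ N, γ s ∈ W := by
  have hWsub : W ⊆ e.source := fun x hx => hWU (subset_closure hx)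
  set V : Set X := e.source ∩ e ⁻¹' (e '' W) with hV
  have hVW : V ⊆ W := by
    rintro x ⟨hxs, w, hw, hew⟩
    rwa [e.injOn (hWsub hw) hxs hew] at hw
  have hWV : W ⊆ V := fun x hx => ⟨hWsub hx, mem_image_of_mem _ hx⟩
  have hVo : IsOpen V := e.continuousOn.isOpen_inter_preimage e.open_source
    (e.isOpen_image_of_subset_source hWo hWsub)
  have hsub : N ⊆ γ ⁻¹' V := by
    apply hN.subset_left_of_subset_union (hVo.preimage hγ)
      ((isClosed_closure (s := W)).isOpen_compl.preimage hγ)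
    · rw [Set.disjoint_left]
      intro s hsV hsc
      exact hsc (subset_closure (hVW hsV))
    · intro s hs
      by_cases hscl : γ s ∈ closure W
      · exact Or.inl ⟨hWU hscl, hmaps s hs⟩
      · exact Or.inr hscl
    · exact ⟨s₀, hs₀, hWV hγs₀⟩
  exact fun s hs => hVW (hsub hs)

/-- Core lemma: on a compact Hausdorff locally connected domain, an ultrafilter of lifts
whose `α`-compositions converge and which converges pointwise, converges in `C(K, X)`. -/
lemma core_lemma {K X Y : Type*} [TopologicalSpace K] [CompactSpace K] [T2Space K]
    [LocallyConnectedSpace K] [TopologicalSpace X] [T2Space X] [RegularSpace X]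
    [TopologicalSpace Y] [T2Space Y]
    {α : X → Y} (hα : IsLocalHomeomorph α)
    (𝒱 : Ultrafilter C(K, X)) {f : C(K, Y)}
    (hf : Tendsto (fun γ : C(K, X) => (⟨α, hα.continuous⟩ : C(X, Y)).comp γ) 𝒱 (𝓝 f))
    {γ₀ : K → X} (hγ₀ : ∀ s, Tendsto (fun γ : C(K, X) => γ s) 𝒱 (𝓝 (γ₀ s))) :
    ∃ γc : C(K, X), (∀ s, γc s = γ₀ s) ∧ (𝒱 : Filter C(K, X)) ≤ 𝓝 γc := by
  -- f is the composition of γ₀ with α, pointwise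
  have hfa : ∀ s, f s = α (γ₀ s) := by
    intro s
    refine tendsto_nhds_unique (l := (𝒱 : Filter C(K, X)))
      (f := fun γ : C(K, X) => α (γ s)) ?_ ((hα.continuous.tendsto _).comp (hγ₀ s))
    exact ((continuous_eval_const s).tendsto f).comp hf
  -- the key local structure
  have key : ∀ s₀ : K, ∃ (N : Set K) (e : OpenPartialHomeomorph X Y),
      IsOpen N ∧ s₀ ∈ N ∧ α = ⇑e ∧
      (∀ s ∈ N, f s ∈ e.target ∧ γ₀ s = e.symm (f s)) ∧
      (∀ᶠ γ : C(K, X) in 𝒱, MapsTo (⇑γ) N e.source) := by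
    intro s₀
    obtain ⟨e, hx₀, rfl⟩ := hα (γ₀ s₀)
    -- shrink the source using regularity
    obtain ⟨t, htm, htc, hts⟩ :=
      exists_mem_nhds_isClosed_subset (e.open_source.mem_nhds hx₀)
    set W : Set X := interior t with hWdef
    have hWo : IsOpen W := isOpen_interior
    have hx₀W : γ₀ s₀ ∈ W := mem_interior_iff_mem_nhds.2 htm
    have hWcl : closure W ⊆ e.source :=
      (closure_minimal interior_subset htc).trans hts
    have hWsub : W ⊆ e.source := fun x hx => hWcl (subset_closure hx)
    have heWo : IsOpen (⇑e '' W) := e.isOpen_image_of_subset_source hWo hWsub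
    -- choose a connected neighborhood N with compact closure mapped by f into e '' W
    have hfs₀ : f s₀ ∈ ⇑e '' W := by rw [hfa s₀]; exact mem_image_of_mem _ hx₀W
    obtain ⟨t', ht'm, ht'c, ht's⟩ :=
      exists_mem_nhds_isClosed_subset ((heWo.preimage f.continuous).mem_nhds hfs₀)
    obtain ⟨N, ⟨hNo, hs₀N, hNconn⟩, hNsub⟩ :=
      (LocallyConnectedSpace.open_connected_basis s₀).mem_iff.1
        (interior_mem_nhds.2 ht'm)
    have hNcl : closure N ⊆ f ⁻¹' (⇑e '' W) :=
      (closure_minimal (hNsub.trans interior_subset) ht'c).trans ht's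
    -- the eventual trapping
    have ev1 : ∀ᶠ γ : C(K, X) in 𝒱, γ s₀ ∈ W := (hγ₀ s₀).eventually (hWo.mem_nhds hx₀W)
    have ev2 : ∀ᶠ γ : C(K, X) in 𝒱,
        MapsTo (⇑((⟨⇑e, hα.continuous⟩ : C(X, Y)).comp γ)) (closure N) (⇑e '' W) :=
      hf.eventually (ContinuousMap.eventually_mapsTo isClosed_closure.isCompact heWo
        (fun s hs => hNcl hs))
    have evtrap : ∀ᶠ γ : C(K, X) in 𝒱, MapsTo (⇑γ) N W := by
      filter_upwards [ev1, ev2] with γ h1 h2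
      exact fun s hs => trap_lemma γ.continuous e hWo hWcl hNconn.isPreconnected
        hs₀N h1 (fun s' hs' => h2 (subset_closure hs')) s hs
    refine ⟨N, e, hNo, hs₀N, rfl, ?_, evtrap.mono fun γ h => h.mono_right hWsub⟩
    intro s hsN
    have hfsW : f s ∈ ⇑e '' W := hNcl (subset_closure hsN)
    have hfst : f s ∈ e.target := by
      obtain ⟨w, hw, hew⟩ := hfsW
      exact hew ▸ e.map_source (hWsub hw)
    refine ⟨hfst, ?_⟩
    -- γ₀ s = e.symm (f s) : pass to the limit
    refine tendsto_nhds_unique (l := (𝒱 : Filter C(K, X)))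
      (f := fun γ : C(K, X) => γ s) (hγ₀ s) ?_
    have hlim : Tendsto (fun γ : C(K, X) => e.symm (e (γ s))) 𝒱 (𝓝 (e.symm (f s))) := by
      refine ((e.continuousAt_symm hfst).tendsto).comp ?_
      exact ((continuous_eval_const s).tendsto f).comp hf
    refine hlim.congr' ?_
    filter_upwards [evtrap] with γ hγ
    exact (e.left_inv (hWsub (hγ hsN)))
  -- continuity of γ₀
  have hcont : Continuous γ₀ := by
    rw [continuous_iff_continuousAt]
    intro s₀
    obtain ⟨N, e, hNo, hs₀N, hαe, hval, -⟩ := key s₀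
    have : ContinuousOn γ₀ N := by
      have h1 : ContinuousOn (fun s => e.symm (f s)) N :=
        e.continuousOn_symm.comp f.continuous.continuousOn (fun s hs => (hval s hs).1)
      exact h1.congr (fun s hs => (hval s hs).2)
    exact this.continuousAt (hNo.mem_nhds hs₀N)
  refine ⟨⟨γ₀, hcont⟩, fun s => rfl, ?_⟩
  -- convergence in the compact-open topology
  have : Tendsto (fun γ : C(K, X) => γ) 𝒱 (𝓝 ⟨γ₀, hcont⟩) := by
    rw [ContinuousMap.tendsto_nhds_compactOpen]
    intro C hC O hO hmapsTo
    -- for each point of C, an eventual neighborhood mapped into O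
    have loc : ∀ s₀ ∈ C, ∃ D : Set K, D ∈ 𝓝 s₀ ∧ ∀ᶠ γ : C(K, X) in 𝒱, MapsTo (⇑γ) D O := by
      intro s₀ hs₀C
      obtain ⟨N, e, hNo, hs₀N, hαe, hval, hev⟩ := key s₀
      have hγ₀O : γ₀ s₀ ∈ O := hmapsTo hs₀C
      have hOU : IsOpen (⇑e '' (e.source ∩ O)) :=
        e.isOpen_image_of_subset_source (e.open_source.inter hO) inter_subset_left
      have hfs₀ : f s₀ ∈ ⇑e '' (e.source ∩ O) := by
        refine ⟨e.symm (f s₀), ⟨e.map_target (hval s₀ hs₀N).1, ?_⟩,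
          e.right_inv (hval s₀ hs₀N).1⟩
        rw [← (hval s₀ hs₀N).2]; exact hγ₀O
      have hNO : IsOpen (N ∩ f ⁻¹' (⇑e '' (e.source ∩ O))) :=
        hNo.inter (hOU.preimage f.continuous)
      obtain ⟨D, hDc, hDi, hDsub⟩ := exists_compact_subset hNO ⟨hs₀N, hfs₀⟩
      refine ⟨D, mem_nhds_iff.2 ⟨interior D, interior_subset, isOpen_interior, hDi⟩, ?_⟩
      have ev2 : ∀ᶠ γ : C(K, X) in 𝒱,
          MapsTo (⇑((⟨α, hα.continuous⟩ : C(X, Y)).comp γ)) D (⇑e '' (e.source ∩ O)) :=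
        hf.eventually (ContinuousMap.eventually_mapsTo hDc hOU
          (fun s hs => (hDsub hs).2))
      filter_upwards [hev, ev2] with γ h1 h2
      intro s hsD
      have hγs : γ s ∈ e.source := h1 (hDsub hsD).1
      have : e (γ s) ∈ ⇑e '' (e.source ∩ O) := by
        have := h2 hsD
        simpa [hαe] using this
      obtain ⟨x, hx, hex⟩ := this
      exact (e.injOn hx.1 hγs hex ▸ hx.2 : γ s ∈ O)
    choose! D hD hDev using loc
    obtain ⟨T, hTC, hTcov⟩ := hC.elim_nhds_subcover D (fun s hs => hD s hs)
    have : ∀ᶠ γ : C(K, X) in 𝒱, ∀ s ∈ T, MapsTo (⇑γ) (D s) O :=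
      (Filter.eventually_all_finset T).2 fun s hs => hDev s (hTC s hs)
    filter_upwards [this] with γ hγ
    intro s hsC
    obtain ⟨s', hs'⟩ := mem_iUnion.1 (hTcov hsC)
    simp only [mem_iUnion, exists_prop] at hs'
    exact hγ s' hs'.1 hs'.2
  exact this

/-- Let `S` be a Hausdorff k-space admitting a cover by compact, locally connected subsets
`K i` such that every compact subset of `S` is contained in a finite union of the `K i`.
Let `X`, `Y`, `Z` be Hausdorff spaces with `X` regular, `α : X → Y` a local homeomorphism
and `β : X → Z` continuous such that `(α, β) : X → Y × Z` is proper. Then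
`g : C(S, X) → C(S, Y) × C(S, Z)`, `γ ↦ (α ∘ γ, β ∘ γ)`, is proper: preimages of
compact sets are compact. -/
theorem isCompact_preimage_comp_pair_of_kspace
    {S X Y Z : Type*} [TopologicalSpace S] [T2Space S]
    (hk : ∀ A : Set S, (∀ K : Set S, IsCompact K → IsClosed (A ∩ K)) → IsClosed A)
    {ι : Type*} (Ks : ι → Set S)
    (hKcomp : ∀ i, IsCompact (Ks i))
    (hKlc : ∀ i, LocallyConnectedSpace (Ks i))
    (hKcov : ⋃ i, Ks i = Set.univ)
    (hKcofinal : ∀ K : Set S, IsCompact K → ∃ Φ : Finset ι, K ⊆ ⋃ i ∈ Φ, Ks i)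
    [TopologicalSpace X] [T2Space X] [RegularSpace X]
    [TopologicalSpace Y] [T2Space Y] [TopologicalSpace Z] [T2Space Z]
    (α : X → Y) (hα : IsLocalHomeomorph α)
    (β : X → Z) (hβ : Continuous β)
    (hprop : ∀ C : Set (Y × Z), IsCompact C →
      IsCompact ((fun x : X => (α x, β x)) ⁻¹' C)) :
    ∀ L : Set (C(S, Y) × C(S, Z)), IsCompact L →
      IsCompact ((fun γ : C(S, X) =>
        ((⟨α, hα.continuous⟩ : C(X, Y)).comp γ,
         (⟨β, hβ⟩ : C(X, Z)).comp γ)) ⁻¹' L) := by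
  intro L hL
  set αc : C(X, Y) := ⟨α, hα.continuous⟩ with hαc
  set βc : C(X, Z) := ⟨β, hβ⟩ with hβc
  set g : C(S, X) → C(S, Y) × C(S, Z) := fun γ => (αc.comp γ, βc.comp γ) with hg
  set P : Set C(S, X) := g ⁻¹' L with hP
  rw [isCompact_iff_ultrafilter_le_nhds']
  intro 𝒰 h𝒰P
  -- limit of the compositions
  have hgL : L ∈ 𝒰.map g := Filter.mem_map.2 h𝒰P
  obtain ⟨⟨f, h⟩, hfhL, hgtend'⟩ := hL.ultrafilter_le_nhds' (𝒰.map g) hgL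
  have hgtend : Tendsto g 𝒰 (𝓝 (f, h)) := hgtend'
  have hf : Tendsto (fun γ : C(S, X) => αc.comp γ) 𝒰 (𝓝 f) :=
    (continuous_fst.tendsto _).comp hgtend
  have hh : Tendsto (fun γ : C(S, X) => βc.comp γ) 𝒰 (𝓝 h) :=
    (continuous_snd.tendsto _).comp hgtend
  -- pointwise limits exist in compact sets
  have hQ : ∀ s : S, ∃ x : X, (Ultrafilter.map (fun γ : C(S, X) => γ s) 𝒰 : Filter X) ≤ 𝓝 x := by
    intro s
    set E : Set (Y × Z) := (fun p : C(S, Y) × C(S, Z) => (p.1 s, p.2 s)) '' L with hE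
    have hEc : IsCompact E := hL.image
      (((continuous_eval_const s).comp continuous_fst).prodMk
       ((continuous_eval_const s).comp continuous_snd))
    have hQc : IsCompact ((fun x : X => (α x, β x)) ⁻¹' E) := hprop E hEc
    have hmem : ((fun x : X => (α x, β x)) ⁻¹' E) ∈ Ultrafilter.map (fun γ : C(S, X) => γ s) 𝒰 := by
      rw [Ultrafilter.mem_map]
      refine Filter.mem_of_superset h𝒰P ?_
      intro γ hγ
      exact ⟨g γ, hγ, rfl⟩
    obtain ⟨x, -, hx⟩ := hQc.ultrafilter_le_nhds' _ hmem
    exact ⟨x, hx⟩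
  choose γ₀ hγ₀' using hQ
  have hγ₀ : ∀ s : S, Tendsto (fun γ : C(S, X) => γ s) 𝒰 (𝓝 (γ₀ s)) := hγ₀'
  -- apply the core lemma on each K i
  have hcore : ∀ i : ι, ∃ γc : C(Ks i, X), (∀ s : Ks i, γc s = γ₀ ↑s) ∧
      (Ultrafilter.map (fun γ : C(S, X) => γ.restrict (Ks i)) 𝒰 : Filter C(Ks i, X))
        ≤ 𝓝 γc := by
    intro i
    haveI : CompactSpace (Ks i) := isCompact_iff_compactSpace.mp (hKcomp i)
    haveI : LocallyConnectedSpace (Ks i) := hKlc i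
    set ρ : C(S, X) → C(Ks i, X) := fun γ => γ.restrict (Ks i) with hρ
    set 𝒱 : Ultrafilter C(Ks i, X) := 𝒰.map ρ with h𝒱
    have hfi : Tendsto (fun δ : C(Ks i, X) => αc.comp δ) 𝒱 (𝓝 (f.restrict (Ks i))) := by
      have h1 : Tendsto (fun γ : C(S, X) => (αc.comp γ).restrict (Ks i)) 𝒰
          (𝓝 (f.restrict (Ks i))) :=
        ((ContinuousMap.continuous_restrict (Ks i)).tendsto f).comp hf
      have h2 : (fun γ : C(S, X) => (αc.comp γ).restrict (Ks i))
          = (fun δ : C(Ks i, X) => αc.comp δ) ∘ ρ := by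
        funext γ; rfl
      rw [h2] at h1
      exact h1
    have hγ₀i : ∀ s : Ks i, Tendsto (fun δ : C(Ks i, X) => δ s) 𝒱 (𝓝 (γ₀ ↑s)) := by
      intro s
      have h1 : Tendsto (fun γ : C(S, X) => γ ↑s) 𝒰 (𝓝 (γ₀ ↑s)) := hγ₀ ↑s
      have h2 : (fun γ : C(S, X) => γ (↑s : S)) = (fun δ : C(Ks i, X) => δ s) ∘ ρ := by
        funext γ; rfl
      rw [h2] at h1
      exact h1
    exact core_lemma hα 𝒱 hfi hγ₀i
  choose γci hγci hγcit using hcore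
  -- continuity of γ₀
  have hγ₀Ki : ∀ i : ι, ∀ F : Set X, IsClosed F → IsClosed (γ₀ ⁻¹' F ∩ Ks i) := by
    intro i F hF
    haveI : CompactSpace (Ks i) := isCompact_iff_compactSpace.mp (hKcomp i)
    have h1 : IsCompact ((⇑(γci i)) ⁻¹' F) := (hF.preimage (γci i).continuous).isCompact
    have h2 : IsCompact (Subtype.val '' ((⇑(γci i)) ⁻¹' F)) := h1.image continuous_subtype_val
    have h3 : Subtype.val '' ((⇑(γci i)) ⁻¹' F) = γ₀ ⁻¹' F ∩ Ks i := by
      ext s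
      constructor
      · rintro ⟨s', hs', rfl⟩
        refine ⟨?_, s'.2⟩
        simp only [Set.mem_preimage] at hs' ⊢
        rw [← hγci i s']
        exact hs'
      · rintro ⟨hsF, hsK⟩
        refine ⟨⟨s, hsK⟩, ?_, rfl⟩
        simp only [Set.mem_preimage] at hsF ⊢
        rw [hγci i ⟨s, hsK⟩]
        exact hsF
    rw [← h3]
    exact h2.isClosed
  have hcont : Continuous γ₀ := by
    rw [continuous_iff_isClosed]
    intro F hF
    apply hk
    intro C hC
    obtain ⟨Φ, hΦ⟩ := hKcofinal C hC
    have heq : γ₀ ⁻¹' F ∩ C = (⋃ i ∈ Φ, (γ₀ ⁻¹' F ∩ Ks i)) ∩ C := by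
      ext s
      constructor
      · rintro ⟨hsF, hsC⟩
        obtain ⟨i, hiΦ, hsKi⟩ := Set.mem_iUnion₂.1 (hΦ hsC)
        exact ⟨Set.mem_iUnion₂.2 ⟨i, hiΦ, hsF, hsKi⟩, hsC⟩
      · rintro ⟨hs, hsC⟩
        simp only [Set.mem_iUnion, exists_prop] at hs
        obtain ⟨i, -, hsF, -⟩ := hs
        exact ⟨hsF, hsC⟩
    rw [heq]
    exact ((Φ.finite_toSet.isClosed_biUnion (fun i _ => hγ₀Ki i F hF))).inter hC.isClosed
  set γc : C(S, X) := ⟨γ₀, hcont⟩ with hγc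
  -- γc is in P
  have hαγ : ∀ s, α (γ₀ s) = f s := by
    intro s
    refine tendsto_nhds_unique (l := (𝒰 : Filter C(S, X)))
      (f := fun γ : C(S, X) => α (γ s)) ((hα.continuous.tendsto _).comp (hγ₀ s)) ?_
    exact ((continuous_eval_const s).tendsto f).comp hf
  have hβγ : ∀ s, β (γ₀ s) = h s := by
    intro s
    refine tendsto_nhds_unique (l := (𝒰 : Filter C(S, X)))
      (f := fun γ : C(S, X) => β (γ s)) ((hβ.tendsto _).comp (hγ₀ s)) ?_
    exact ((continuous_eval_const s).tendsto h).comp hh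
  have hγcP : γc ∈ P := by
    have : g γc = (f, h) := by
      refine Prod.ext ?_ ?_
      · exact ContinuousMap.ext fun s => hαγ s
      · exact ContinuousMap.ext fun s => hβγ s
    rw [hP, Set.mem_preimage, this]
    exact hfhL
  refine ⟨γc, hγcP, ?_⟩
  -- convergence
  have : Tendsto (fun γ : C(S, X) => γ) 𝒰 (𝓝 γc) := by
    rw [ContinuousMap.tendsto_nhds_compactOpen]
    intro C hC O hO hmapsTo
    obtain ⟨Φ, hΦ⟩ := hKcofinal C hC
    have hev : ∀ i ∈ Φ, ∀ᶠ γ : C(S, X) in 𝒰, MapsTo (⇑γ) (C ∩ Ks i) O := by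
      intro i _
      haveI : CompactSpace (Ks i) := isCompact_iff_compactSpace.mp (hKcomp i)
      have htend : Tendsto (fun γ : C(S, X) => γ.restrict (Ks i)) 𝒰 (𝓝 (γci i)) := hγcit i
      have hCi : IsCompact ((Subtype.val : Ks i → S) ⁻¹' C) :=
        (hC.isClosed.preimage continuous_subtype_val).isCompact
      have hmi : MapsTo (⇑(γci i)) ((Subtype.val : Ks i → S) ⁻¹' C) O := by
        intro s hs
        rw [hγci i s]
        exact hmapsTo hs
      have := htend.eventually (ContinuousMap.eventually_mapsTo hCi hO hmi)
      filter_upwards [this] with γ hγ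
      rintro s ⟨hsC, hsK⟩
      exact hγ (show (⟨s, hsK⟩ : Ks i).val ∈ C from hsC)
    have hall : ∀ᶠ γ : C(S, X) in 𝒰, ∀ i ∈ Φ, MapsTo (⇑γ) (C ∩ Ks i) O :=
      (Filter.eventually_all_finset Φ).2 hev
    filter_upwards [hall] with γ hγ
    intro s hsC
    obtain ⟨i, hiΦ, hsKi⟩ := Set.mem_iUnion₂.1 (hΦ hsC)
    exact hγ i hiΦ ⟨hsC, hsKi⟩
  exact this
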